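/- Define A_j = 2^{j^2+j} · (∏_{i=m-2j+1}^{m} (2^i - 1)) / (∏_{i=1}^{j} (2^{2i} - 1)) for 1 ≤ j ≤ floor(m/2), m ≥ 6. Then for 2 ≤ j ≤ floor(m/2) - 1, A_{j+1} · A_{j-1} ≤ A_j^2 (log-concavity of the side-lobe frequencies of R(2,m)). -/

import Mathlib

open Finset

private lemma peel_bot (f : ℕ → ℚ) {a m : ℕ} (h : a ≤ m) :
    ∏ i ∈ Finset.Icc a m, f i = f a * ∏ i ∈ Finset.Icc (a + 1) m, f i := by
  rw [← Finset.insert_Icc_add_one_left_eq_Icc h, Finset.prod_insert (by simp)]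

private lemma peel_top (f : ℕ → ℚ) {m : ℕ} (h : 1 ≤ m + 1) :
    ∏ i ∈ Finset.Icc 1 (m + 1), f i = f (m + 1) * ∏ i ∈ Finset.Icc 1 m, f i := by
  rw [← Finset.insert_Icc_right_eq_Icc_add_one h, Finset.prod_insert (by simp)]

set_option maxHeartbeats 1600000 in
/-- Log-concavity of the side-lobe frequencies of the second order Reed–Muller
code `R(2,m)`, `m ≥ 6`: with
`A_j = 2^{j²+j}·(∏_{i=m-2j+1}^{m}(2^i-1))/(∏_{i=1}^{j}(2^{2i}-1))`,
for all `2 ≤ j ≤ ⌊m/2⌋ - 1` we have `A_{j+1}·A_{j-1} ≤ A_j²`. -/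
theorem rm2_side_frequencies_log_concave (m j : ℕ) (hm : 6 ≤ m) (hj : 2 ≤ j)
    (hjm : j ≤ m / 2 - 1) :
    let A : ℕ → ℚ := fun j =>
      2 ^ (j ^ 2 + j) * (∏ i ∈ Finset.Icc (m - 2 * j + 1) m, ((2 : ℚ) ^ i - 1)) /
        ∏ i ∈ Finset.Icc 1 j, ((2 : ℚ) ^ (2 * i) - 1)
    A (j + 1) * A (j - 1) ≤ A j ^ 2 := by
  intro A
  obtain ⟨k, rfl⟩ : ∃ k, j = k + 1 := ⟨j - 1, by omega⟩
  have hk1 : 1 ≤ k := by omega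
  have h2j : 2 * k + 4 ≤ m := by omega
  set a := m - 2 * k - 3 with ha
  have ha1 : 1 ≤ a := by omega
  have haj : a + 3 ≤ m := by omega
  have e1 : m - 2 * (k + 1 + 1) + 1 = a := by omega
  have e2 : m - 2 * (k + 1) + 1 = a + 2 := by omega
  have e3 : m - 2 * (k + 1 - 1) + 1 = a + 4 := by omega
  have e4 : k + 1 - 1 = k := by omega
  have e3' : m - 2 * k + 1 = a + 4 := by omega
  -- atoms
  set t : ℚ := (2 : ℚ) ^ a with ht
  have ht2 : 2 ≤ t := by
    calc (2 : ℚ) = 2 ^ 1 := (pow_one 2).symm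
    _ ≤ 2 ^ a := pow_le_pow_right₀ (by norm_num) ha1
  set w : ℚ := (2 : ℚ) ^ k with hw
  have hw2 : 2 ≤ w := by
    calc (2 : ℚ) = 2 ^ 1 := (pow_one 2).symm
    _ ≤ 2 ^ k := pow_le_pow_right₀ (by norm_num) hk1
  set c : ℚ := (2 : ℚ) ^ (k ^ 2 + k) with hc
  have hcpos : (0 : ℚ) < c := by positivity
  set P : ℚ := ∏ i ∈ Finset.Icc (a + 4) m, ((2 : ℚ) ^ i - 1) with hPdef
  set Q : ℚ := ∏ i ∈ Finset.Icc 1 k, ((2 : ℚ) ^ (2 * i) - 1) with hQdef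
  have hP1 : ∏ i ∈ Finset.Icc a m, ((2 : ℚ) ^ i - 1)
      = (t - 1) * ((2 * t - 1) * ((4 * t - 1) * ((8 * t - 1) * P))) := by
    rw [peel_bot _ (by omega), peel_bot _ (by omega), peel_bot _ (by omega),
      peel_bot _ (by omega), ht, ← hPdef]
    ring
  have hP2 : ∏ i ∈ Finset.Icc (a + 2) m, ((2 : ℚ) ^ i - 1)
      = (4 * t - 1) * ((8 * t - 1) * P) := by
    rw [peel_bot _ (by omega), peel_bot _ (by omega), ht, ← hPdef]
    ring
  have hQ1 : ∏ i ∈ Finset.Icc 1 (k + 1), ((2 : ℚ) ^ (2 * i) - 1)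
      = (4 * w ^ 2 - 1) * Q := by
    rw [peel_top _ (by omega), ← hQdef, hw,
      show 2 * (k + 1) = k * 2 + 2 by ring, pow_add (2 : ℚ) (k * 2) 2, pow_mul (2 : ℚ) k 2]
    ring
  have hQ2 : ∏ i ∈ Finset.Icc 1 (k + 1 + 1), ((2 : ℚ) ^ (2 * i) - 1)
      = (16 * w ^ 2 - 1) * ((4 * w ^ 2 - 1) * Q) := by
    rw [peel_top _ (by omega), hQ1, hw,
      show 2 * (k + 1 + 1) = k * 2 + 4 by ring, pow_add (2 : ℚ) (k * 2) 4, pow_mul (2 : ℚ) k 2]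
    ring
  -- positivity
  have hPpos : 0 < P := by
    rw [hPdef]
    apply Finset.prod_pos
    intro i hi
    simp only [Finset.mem_Icc] at hi
    have : (2 : ℚ) ^ 1 ≤ 2 ^ i := pow_le_pow_right₀ (by norm_num) (by omega)
    nlinarith
  have hQpos : 0 < Q := by
    rw [hQdef]
    apply Finset.prod_pos
    intro i hi
    simp only [Finset.mem_Icc] at hi
    have : (2 : ℚ) ^ 1 ≤ 2 ^ (2 * i) := pow_le_pow_right₀ (by norm_num) (by omega)
    nlinarith
  -- power-of-two bookkeeping
  have hpowj : (2 : ℚ) ^ ((k + 1) ^ 2 + (k + 1)) = 4 * c * w ^ 2 := by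
    rw [show (k + 1) ^ 2 + (k + 1) = (k ^ 2 + k) + (k * 2 + 2) by ring,
      pow_add (2 : ℚ) (k ^ 2 + k) (k * 2 + 2), pow_add (2 : ℚ) (k * 2) 2,
      pow_mul (2 : ℚ) k 2, hc, hw]
    ring
  have hpowj1 : (2 : ℚ) ^ ((k + 1 + 1) ^ 2 + (k + 1 + 1)) = 64 * c * w ^ 4 := by
    rw [show (k + 1 + 1) ^ 2 + (k + 1 + 1) = (k ^ 2 + k) + (k * 4 + 6) by ring,
      pow_add (2 : ℚ) (k ^ 2 + k) (k * 4 + 6), pow_add (2 : ℚ) (k * 4) 6,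
      pow_mul (2 : ℚ) k 4, hc, hw]
    ring
  have hpowk : (2 : ℚ) ^ ((k + 1 - 1) ^ 2 + (k + 1 - 1)) = c := by
    rw [e4, hc]
  -- unfold A and reduce to a cross-multiplied polynomial inequality
  simp only [A, e1, e2, e3, e4, e3', hP1, hP2, hQ1, hQ2, hpowj, hpowj1, hpowk, ← hPdef, ← hQdef, ← hc]
  have hw1 : (0 : ℚ) < 4 * w ^ 2 - 1 := by nlinarith
  have hw16 : (0 : ℚ) < 16 * w ^ 2 - 1 := by nlinarith
  have ht4 : (0 : ℚ) < 4 * t - 1 := by linarith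
  have ht8 : (0 : ℚ) < 8 * t - 1 := by linarith
  rw [div_mul_div_comm, div_pow,
    div_le_div_iff₀
      (by positivity : (0 : ℚ) < (16 * w ^ 2 - 1) * ((4 * w ^ 2 - 1) * Q) * Q)
      (by positivity : (0 : ℚ) < ((4 * w ^ 2 - 1) * Q) ^ 2)]
  have key : 4 * ((t - 1) * (2 * t - 1) * (4 * w ^ 2 - 1))
      ≤ (4 * t - 1) * (8 * t - 1) * (16 * w ^ 2 - 1) := by
    have h1 : (0 : ℚ) ≤ (24 * t ^ 2 - 3) * (4 * w ^ 2 - 1) :=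
      mul_nonneg (by nlinarith) (by nlinarith)
    have h2 : (0 : ℚ) ≤ (32 * t ^ 2 - 12 * t + 1) * (12 * w ^ 2) :=
      mul_nonneg (by nlinarith) (by positivity)
    nlinarith [h1, h2]
  have hM : (0 : ℚ) ≤ 16 * c ^ 2 * w ^ 4 * ((4 * t - 1) * (8 * t - 1)) * P ^ 2
      * (4 * w ^ 2 - 1) * Q ^ 2 := by positivity
  nlinarith [mul_le_mul_of_nonneg_right key hM]
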